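/- Let Δ ∈ ℝ^{m×n} and let U_1 ∈ ℝ^{m×m}, U_2 ∈ ℝ^{n×n} be invertible matrices with singular values σ_1(U_k) ≥ ... ordered non-increasingly. Then ‖U_1⁻¹ Δ U_2⁻ᵀ‖_F² ≤ Σ_{i=1}^{r} σ_i(Δ)² / (σ_{m−i+1}(U_1)² σ_{n−i+1}(U_2)²), where r = min{m,n}. -/

import Mathlib

open MeasureTheory ProbabilityTheory Filter Matrix

noncomputable def frob {m n : ℕ} (M : Matrix (Fin m) (Fin n) ℝ) : ℝ :=
  Real.sqrt (∑ i, ∑ j, (M i j)^2)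

noncomputable def sv {m n : ℕ} (M : Matrix (Fin m) (Fin n) ℝ) : Fin n → ℝ :=
  fun i => Real.sqrt ((show (Mᵀ * M).IsHermitian by
    simpa [Matrix.conjTranspose_eq_transpose_of_trivial] using
      Matrix.isHermitian_conjTranspose_mul_self M).eigenvalues i)

/-- `σ` is the non-increasingly ordered tuple of singular values of `M`. -/
def IsSVals {m n : ℕ} (M : Matrix (Fin m) (Fin n) ℝ) (σ : Fin n → ℝ) : Prop :=
  Antitone σ ∧ ∃ e : Equiv.Perm (Fin n), σ = sv M ∘ e

/-- Standard normal CDF. -/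
noncomputable def Phi (t : ℝ) : ℝ :=
  (Real.sqrt (2 * Real.pi))⁻¹ * ∫ u in Set.Iic t, Real.exp (-u^2/2)

namespace SVD
open Finset


def pad {p : ℕ} (f : Fin p → ℝ) : ℕ → ℝ := fun i => if h : i < p then f ⟨i, h⟩ else 0

lemma pad_lt {p : ℕ} {f : Fin p → ℝ} {i : ℕ} (h : i < p) : pad f i = f ⟨i, h⟩ := dif_pos h

lemma pad_ge {p : ℕ} {f : Fin p → ℝ} {i : ℕ} (h : p ≤ i) : pad f i = 0 := dif_neg (not_lt.2 h)

lemma pad_fin {p : ℕ} (f : Fin p → ℝ) (i : Fin p) : pad f i.1 = f i := by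
  rw [pad_lt i.2]

lemma sum_pad {p : ℕ} (f : Fin p → ℝ) : ∑ i ∈ range p, pad f i = ∑ i : Fin p, f i := by
  rw [← Fin.sum_univ_eq_sum_range]
  exact Finset.sum_congr rfl fun i _ => pad_fin f i

lemma pad_anti {p : ℕ} {f : Fin p → ℝ} (hf : Antitone f) (hf0 : ∀ i, 0 ≤ f i) :
    ∀ i j : ℕ, i ≤ j → pad f j ≤ pad f i := by
  intro i j hij
  by_cases hj : j < p
  · have hi : i < p := lt_of_le_of_lt hij hj
    rw [pad_lt hj, pad_lt hi]
    exact hf (by exact hij)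
  · rw [pad_ge (not_lt.1 hj)]
    by_cases hi : i < p
    · rw [pad_lt hi]; exact hf0 _
    · rw [pad_ge (not_lt.1 hi)]

lemma pad_nonneg {p : ℕ} {f : Fin p → ℝ} (hf0 : ∀ i, 0 ≤ f i) (i : ℕ) : 0 ≤ pad f i := by
  by_cases hi : i < p
  · rw [pad_lt hi]; exact hf0 _
  · rw [pad_ge (not_lt.1 hi)]

/-- split a range sum at `k` -/
lemma sum_range_split (f : ℕ → ℝ) {k p : ℕ} (hk : k ≤ p) :
    ∑ i ∈ range p, f i = ∑ i ∈ range k, f i + ∑ i ∈ Ico k p, f i := by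
  rw [← Finset.sum_range_add_sum_Ico f hk]

/-- Core counting lemma: if `0 ≤ c ≤ 1` sums to `k`, then `∑ λ c ≤` top-`k` sum of antitone `λ`. -/
lemma key_count {p k : ℕ} (hk : k ≤ p) (lam c : ℕ → ℝ)
    (hlam : ∀ i j : ℕ, i ≤ j → lam j ≤ lam i)
    (hc0 : ∀ i, 0 ≤ c i) (hc1 : ∀ i, c i ≤ 1)
    (hsum : ∑ i ∈ range p, c i = (k : ℝ)) :
    ∑ i ∈ range p, lam i * c i ≤ ∑ i ∈ range k, lam i := by
  rcases Nat.eq_zero_or_pos k with hk0 | hk0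
  · subst hk0
    have hc : ∀ i ∈ range p, c i = 0 := by
      intro i hi
      have := (Finset.sum_eq_zero_iff_of_nonneg (fun j _ => hc0 j)).1 (by simpa using hsum)
      exact this i hi
    simp only [range_zero, sum_empty]
    calc ∑ i ∈ range p, lam i * c i = ∑ i ∈ range p, 0 := by
          refine Finset.sum_congr rfl fun i hi => by rw [hc i hi, mul_zero]
      _ = 0 := by simp
    simp
  · set θ := lam (k - 1) with hθ
    have hstep : ∀ i ∈ range p, lam i * c i ≤ θ * c i + (if i < k then lam i - θ else 0) := by
      intro i _
      by_cases hik : i < k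
      · rw [if_pos hik]
        have h1 : θ ≤ lam i := hlam i (k-1) (Nat.le_sub_one_of_lt hik)
        nlinarith [hc1 i, hc0 i]
      · rw [if_neg hik]
        have h1 : lam i ≤ θ := hlam (k-1) i (le_trans (Nat.sub_le _ _) (not_lt.1 hik))
        nlinarith [hc0 i]
    calc ∑ i ∈ range p, lam i * c i
        ≤ ∑ i ∈ range p, (θ * c i + (if i < k then lam i - θ else 0)) :=
          Finset.sum_le_sum hstep
      _ = θ * (k : ℝ) + ∑ i ∈ range p, (if i < k then lam i - θ else 0) := by
          rw [Finset.sum_add_distrib, ← Finset.mul_sum, hsum]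
      _ = θ * (k : ℝ) + ∑ i ∈ range k, (lam i - θ) := by
          congr 1
          rw [Finset.sum_ite, Finset.sum_const_zero, add_zero]
          refine Finset.sum_congr ?_ fun _ _ => rfl
          ext i
          simp only [Finset.mem_filter, Finset.mem_range]
          exact ⟨fun ⟨_, h⟩ => h, fun h => ⟨lt_of_lt_of_le h hk, h⟩⟩
      _ = ∑ i ∈ range k, lam i := by
          rw [Finset.sum_sub_distrib]
          simp [Finset.sum_const, Finset.card_range]
          ring
  
/-- Abel summation comparison. -/
lemma abel_le {p : ℕ} (w a b : ℕ → ℝ)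
    (hw : ∀ i j : ℕ, i ≤ j → w j ≤ w i) (hw0 : ∀ i, 0 ≤ w i)
    (hab : ∀ k, k ≤ p → ∑ i ∈ range k, a i ≤ ∑ i ∈ range k, b i) :
    ∑ i ∈ range p, w i * a i ≤ ∑ i ∈ range p, w i * b i := by
  have key : ∀ f : ℕ → ℝ, ∑ i ∈ range p, w i * f i
      = w (p-1) * (∑ i ∈ range p, f i)
        - ∑ i ∈ range (p-1), (w (i+1) - w i) * (∑ j ∈ range (i+1), f j) := by
    intro f
    simpa [smul_eq_mul] using Finset.sum_range_by_parts w f p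
  rw [key a, key b]
  have h1 : w (p-1) * (∑ i ∈ range p, a i) ≤ w (p-1) * (∑ i ∈ range p, b i) :=
    mul_le_mul_of_nonneg_left (hab p le_rfl) (hw0 _)
  have h2 : ∑ i ∈ range (p-1), (w (i+1) - w i) * (∑ j ∈ range (i+1), b j)
      ≤ ∑ i ∈ range (p-1), (w (i+1) - w i) * (∑ j ∈ range (i+1), a j) := by
    refine Finset.sum_le_sum fun i hi => ?_
    have hnp : w (i+1) - w i ≤ 0 := sub_nonpos.2 (hw i (i+1) (Nat.le_succ i))
    have hi' : i + 1 ≤ p := by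
      have := Finset.mem_range.1 hi; omega
    exact mul_le_mul_of_nonpos_left (hab (i+1) hi') hnp
  linarith



variable {p : ℕ}

def Ortho {p : ℕ} (V : Matrix (Fin p) (Fin p) ℝ) : Prop := Vᵀ * V = 1

def Spec {p : ℕ} (M : Matrix (Fin p) (Fin p) ℝ) (μ : Fin p → ℝ) : Prop :=
  ∃ V, Ortho V ∧ M = V * Matrix.diagonal μ * Vᵀ

lemma Ortho.self_mul_T {V : Matrix (Fin p) (Fin p) ℝ} (h : Ortho V) : V * Vᵀ = 1 :=
  mul_eq_one_comm.1 h

lemma sandwich_apply (V : Matrix (Fin p) (Fin p) ℝ) (μ : Fin p → ℝ) (a b : Fin p) :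
    (V * Matrix.diagonal μ * Vᵀ) a b = ∑ j, V a j * μ j * V b j := by
  rw [Matrix.mul_assoc, Matrix.mul_apply]
  refine Finset.sum_congr rfl fun j _ => ?_
  rw [Matrix.diagonal_mul, Matrix.transpose_apply]
  ring

/-- spectral theorem, real case, `Spec` form -/
lemma spec_of_isHermitian {M : Matrix (Fin p) (Fin p) ℝ} (hM : M.IsHermitian) :
    Spec M hM.eigenvalues := by
  refine ⟨hM.eigenvectorUnitary.1, ?_, ?_⟩
  · have h2 := hM.eigenvectorUnitary.2
    rw [Matrix.mem_unitaryGroup_iff'] at h2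
    rw [Ortho, ← Matrix.conjTranspose_eq_transpose_of_trivial]
    exact h2
  · have := hM.spectral_theorem
    simpa [Matrix.star_eq_conjTranspose, Matrix.conjTranspose_eq_transpose_of_trivial] using this

lemma Spec.perm {M : Matrix (Fin p) (Fin p) ℝ} {μ : Fin p → ℝ} (h : Spec M μ)
    (e : Equiv.Perm (Fin p)) : Spec M (μ ∘ e) := by
  obtain ⟨V, hV, rfl⟩ := h
  refine ⟨V.submatrix id e, ?_, ?_⟩
  · ext i j
    have h1 := congrFun (congrFun hV (e i)) (e j)
    simp only [Matrix.mul_apply, Matrix.transpose_apply, Matrix.submatrix_apply, id] at h1 ⊢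
    rw [h1]
    simp [Matrix.one_apply, EmbeddingLike.apply_eq_iff_eq]
  · ext a b
    rw [sandwich_apply, sandwich_apply]
    simp only [Matrix.submatrix_apply, id, Function.comp_apply]
    exact (Equiv.sum_comp e fun j => V a j * μ j * V b j).symm

lemma Spec.det_eq {M : Matrix (Fin p) (Fin p) ℝ} {μ : Fin p → ℝ} (h : Spec M μ) :
    M.det = ∏ i, μ i := by
  obtain ⟨V, hV, rfl⟩ := h
  have h1 : V.det * V.det = 1 := by
    have := congrArg Matrix.det hV
    rwa [Matrix.det_mul, Matrix.det_transpose, Matrix.det_one] at this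
  rw [Matrix.det_mul, Matrix.det_mul, Matrix.det_transpose, Matrix.det_diagonal]
  have : V.det * (∏ i, μ i) * V.det = (V.det * V.det) * ∏ i, μ i := by ring
  rw [this, h1, one_mul]

lemma Spec.inv {M : Matrix (Fin p) (Fin p) ℝ} {μ : Fin p → ℝ} (h : Spec M μ)
    (hμ : ∀ i, μ i ≠ 0) : Spec M⁻¹ (fun i => (μ i)⁻¹) := by
  obtain ⟨V, hV, rfl⟩ := h
  refine ⟨V, hV, ?_⟩
  apply Matrix.inv_eq_right_inv
  calc V * Matrix.diagonal μ * Vᵀ * (V * Matrix.diagonal (fun i => (μ i)⁻¹) * Vᵀ)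
      = V * Matrix.diagonal μ * (Vᵀ * V) * Matrix.diagonal (fun i => (μ i)⁻¹) * Vᵀ := by
        simp only [Matrix.mul_assoc]
    _ = V * (Matrix.diagonal μ * Matrix.diagonal (fun i => (μ i)⁻¹)) * Vᵀ := by
        rw [hV]; simp only [Matrix.mul_one, Matrix.mul_assoc]
    _ = V * Vᵀ := by
        rw [Matrix.diagonal_mul_diagonal]
        have : (fun i => μ i * (μ i)⁻¹) = fun _ => (1:ℝ) := by
          funext i; exact mul_inv_cancel₀ (hμ i)
        rw [this, Matrix.diagonal_one, Matrix.mul_one]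
    _ = 1 := Ortho.self_mul_T hV
  
lemma spec_swap {N : Matrix (Fin p) (Fin p) ℝ} {μ : Fin p → ℝ}
    (h : Spec (N * Nᵀ) μ) (hμ : ∀ i, 0 < μ i) : Spec (Nᵀ * N) μ := by
  obtain ⟨V, hV, hM⟩ := h
  set S : Matrix (Fin p) (Fin p) ℝ := Matrix.diagonal (fun i => (Real.sqrt (μ i))⁻¹) with hS
  have hsqrt : ∀ i, Real.sqrt (μ i) ≠ 0 := fun i =>
    ne_of_gt (Real.sqrt_pos.2 (hμ i))
  have hSDS : S * Matrix.diagonal μ * S = 1 := by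
    rw [hS, Matrix.diagonal_mul_diagonal, Matrix.diagonal_mul_diagonal]
    rw [show (fun i => (Real.sqrt (μ i))⁻¹ * μ i * (Real.sqrt (μ i))⁻¹) = fun _ => (1:ℝ) from ?_]
    · exact Matrix.diagonal_one
    · funext i
      rw [← Real.mul_self_sqrt (le_of_lt (hμ i))]
      field_simp
      rw [Real.sq_sqrt (sq_nonneg _)]
      exact div_self (pow_ne_zero 2 (hsqrt i))
  refine ⟨Nᵀ * V * S, ?_, ?_⟩
  · show (Nᵀ * V * S)ᵀ * (Nᵀ * V * S) = 1
    have hT : (Nᵀ * V * S)ᵀ = S * (Vᵀ * N) := by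
      rw [Matrix.transpose_mul, Matrix.transpose_mul, Matrix.transpose_transpose, hS,
        Matrix.diagonal_transpose]
    rw [hT]
    calc S * (Vᵀ * N) * (Nᵀ * V * S) = S * (Vᵀ * (N * Nᵀ) * V) * S := by
          simp only [Matrix.mul_assoc]
      _ = S * (Vᵀ * (V * Matrix.diagonal μ * Vᵀ) * V) * S := by rw [← hM]
      _ = S * ((Vᵀ * V) * Matrix.diagonal μ * (Vᵀ * V)) * S := by
          simp only [Matrix.mul_assoc]
      _ = S * Matrix.diagonal μ * S := by rw [hV]; simp only [Matrix.one_mul, Matrix.mul_one]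
      _ = 1 := hSDS
  · have hT : (Nᵀ * V * S)ᵀ = S * (Vᵀ * N) := by
      rw [Matrix.transpose_mul, Matrix.transpose_mul, Matrix.transpose_transpose, hS,
        Matrix.diagonal_transpose]
    rw [hT]
    calc Nᵀ * N = Nᵀ * (V * Vᵀ) * N := by rw [hV.self_mul_T]; simp only [Matrix.mul_one, Matrix.mul_assoc]
      _ = Nᵀ * (V * ((S * Matrix.diagonal μ * S) * Vᵀ)) * N := by
          rw [hSDS]; simp only [Matrix.one_mul]
      _ = Nᵀ * V * S * Matrix.diagonal μ * (S * (Vᵀ * N)) := by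
          simp only [Matrix.mul_assoc]

lemma Spec.posSemidef {M : Matrix (Fin p) (Fin p) ℝ} {μ : Fin p → ℝ} (h : Spec M μ)
    (hμ : ∀ i, 0 ≤ μ i) : M.PosSemidef := by
  obtain ⟨V, hV, rfl⟩ := h
  have hD : (Matrix.diagonal μ).PosSemidef := Matrix.PosSemidef.diagonal hμ
  have := hD.mul_mul_conjTranspose_same V
  rwa [Matrix.conjTranspose_eq_transpose_of_trivial] at this

lemma Spec.isHermitian {M : Matrix (Fin p) (Fin p) ℝ} {μ : Fin p → ℝ} (h : Spec M μ) :
    M.IsHermitian := by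
  obtain ⟨V, hV, rfl⟩ := h
  rw [Matrix.IsHermitian, Matrix.conjTranspose_eq_transpose_of_trivial]
  rw [Matrix.transpose_mul, Matrix.transpose_mul, Matrix.transpose_transpose,
    Matrix.diagonal_transpose, Matrix.mul_assoc]

/-- existence of a sorted nonnegative spectrum for a psd matrix -/
lemma exists_spec_sorted {M : Matrix (Fin p) (Fin p) ℝ} (hM : M.PosSemidef) :
    ∃ β : Fin p → ℝ, Antitone β ∧ (∀ i, 0 ≤ β i) ∧ Spec M β := by
  have hH := hM.1
  set ev := hH.eigenvalues with hev
  set e : Equiv.Perm (Fin p) := Fin.revPerm.trans (Tuple.sort ev) with he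
  refine ⟨ev ∘ e, ?_, ?_, (spec_of_isHermitian hH).perm e⟩
  · intro i j hij
    have := Tuple.monotone_sort ev (Fin.rev_le_rev.2 hij)
    simpa [he] using this
  · intro i
    exact hM.eigenvalues_nonneg _

/-- the fundamental trace formula -/
lemma trace_spec_formula (V W : Matrix (Fin p) (Fin p) ℝ) (μ ν : Fin p → ℝ)
    (hV : Ortho V) :
    Matrix.trace ((V * Matrix.diagonal μ * Vᵀ) * (W * Matrix.diagonal ν * Wᵀ))
      = ∑ i, ∑ j, μ i * ν j * ((Vᵀ * W) i j)^2 := by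
  set Z := Vᵀ * W with hZ
  have h1 : (V * Matrix.diagonal μ * Vᵀ) * (W * Matrix.diagonal ν * Wᵀ)
      = V * (Matrix.diagonal μ * Z * Matrix.diagonal ν * Zᵀ) * Vᵀ := by
    rw [hZ]
    simp only [Matrix.transpose_mul, Matrix.transpose_transpose, Matrix.mul_assoc]
    rw [Ortho.self_mul_T hV]
    simp only [Matrix.mul_one]
  rw [h1]
  rw [Matrix.trace_mul_comm (V * (Matrix.diagonal μ * Z * Matrix.diagonal ν * Zᵀ)) Vᵀ]
  rw [← Matrix.mul_assoc]
  rw [show Vᵀ * V = 1 from hV, Matrix.one_mul]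
  have key : ∀ i, (Matrix.diagonal μ * Z * Matrix.diagonal ν * Zᵀ) i i
      = ∑ j, μ i * ν j * (Z i j)^2 := by
    intro i
    rw [Matrix.mul_apply]
    refine Finset.sum_congr rfl fun j _ => ?_
    rw [Matrix.mul_diagonal, Matrix.diagonal_mul, Matrix.transpose_apply]
    ring
  rw [Matrix.trace]
  exact Finset.sum_congr rfl fun i _ => key i


-- (parts 1,2 assumed; compiled separately by concatenation later)
section part3
variable {p : ℕ}

lemma sum_ite_range {p k : ℕ} (hk : k ≤ p) (g : ℕ → ℝ) :
    ∑ i ∈ range p, (if i < k then g i else 0) = ∑ i ∈ range k, g i := by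
  rw [Finset.sum_ite, Finset.sum_const_zero, add_zero]
  refine Finset.sum_congr ?_ fun _ _ => rfl
  ext i
  simp only [Finset.mem_filter, Finset.mem_range]
  exact ⟨fun ⟨_, h⟩ => h, fun h => ⟨lt_of_lt_of_le h hk, h⟩⟩

lemma sum_range_pad_eq {k : ℕ} (hk : k ≤ p) (f : Fin p → ℝ) :
    ∑ i ∈ range k, pad f i = ∑ i : Fin p, (if i.1 < k then f i else 0) := by
  rw [← sum_ite_range hk (pad f), ← Fin.sum_univ_eq_sum_range (fun i => if i < k then pad f i else 0) p]
  refine Finset.sum_congr rfl fun i _ => ?_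
  by_cases h : i.1 < k <;> simp [h, pad_fin]

lemma key_count_fin {k : ℕ} (hk : k ≤ p) (β : Fin p → ℝ) (c : Fin p → ℝ)
    (hβ : Antitone β) (hβ0 : ∀ i, 0 ≤ β i) (hc0 : ∀ j, 0 ≤ c j) (hc1 : ∀ j, c j ≤ 1)
    (hsum : ∑ j, c j = (k : ℝ)) :
    ∑ j, β j * c j ≤ ∑ i ∈ range k, pad β i := by
  have h := key_count hk (pad β) (pad c) (pad_anti hβ hβ0)
    (pad_nonneg hc0)
    (fun i => by
      by_cases h : i < p
      · rw [pad_lt h]; exact hc1 _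
      · rw [pad_ge (not_lt.1 h)]; norm_num)
    (by rw [sum_pad]; exact hsum)
  calc ∑ j, β j * c j = ∑ i ∈ range p, pad β i * pad c i := by
        rw [← Fin.sum_univ_eq_sum_range (fun i => pad β i * pad c i) p]
        exact Finset.sum_congr rfl fun j _ => by rw [pad_fin, pad_fin]
    _ ≤ ∑ i ∈ range k, pad β i := h

lemma trace_diagonal_mul (μ : Fin p → ℝ) (K : Matrix (Fin p) (Fin p) ℝ) :
    Matrix.trace (Matrix.diagonal μ * K) = ∑ i, μ i * K i i := by
  rw [Matrix.trace]
  refine Finset.sum_congr rfl fun i _ => ?_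
  simp [Matrix.diag, Matrix.diagonal_mul]

lemma ortho_mul {V W : Matrix (Fin p) (Fin p) ℝ} (hV : Ortho V) (hW : Ortho W) :
    Ortho (Vᵀ * W) := by
  show (Vᵀ * W)ᵀ * (Vᵀ * W) = 1
  rw [Matrix.transpose_mul, Matrix.transpose_transpose]
  calc Wᵀ * V * (Vᵀ * W) = Wᵀ * (V * Vᵀ) * W := by simp only [Matrix.mul_assoc]
    _ = Wᵀ * W := by rw [Ortho.self_mul_T hV, Matrix.mul_one]
    _ = 1 := hW

lemma ortho_row_sq {Z : Matrix (Fin p) (Fin p) ℝ} (hZ : Ortho Z) (i : Fin p) :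
    ∑ j, (Z i j)^2 = 1 := by
  have h := congrFun (congrFun (Ortho.self_mul_T hZ) i) i
  rw [Matrix.mul_apply] at h
  simp only [Matrix.transpose_apply, Matrix.one_apply_eq] at h
  rw [← h]
  exact Finset.sum_congr rfl fun j _ => (sq (Z i j)).symm ▸ (pow_two (Z i j))

lemma ortho_col_sq {Z : Matrix (Fin p) (Fin p) ℝ} (hZ : Ortho Z) (j : Fin p) :
    ∑ i, (Z i j)^2 = 1 := by
  have h := congrFun (congrFun (hZ : Zᵀ * Z = 1) j) j
  rw [Matrix.mul_apply] at h
  simp only [Matrix.transpose_apply, Matrix.one_apply_eq] at h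
  rw [← h]
  exact Finset.sum_congr rfl fun i _ => (pow_two (Z i j))

/-- Flexible Ruhe / von-Neumann-type trace inequality. -/
lemma ruhe_flex {A B : Matrix (Fin p) (Fin p) ℝ} {α β : Fin p → ℝ} (e : ℕ → ℝ)
    (hA : Spec A α) (hα : Antitone α) (hα0 : ∀ i, 0 ≤ α i)
    (hB : Spec B β) (hβ : Antitone β) (hβ0 : ∀ i, 0 ≤ β i)
    (hpre : ∀ k, k ≤ p → ∑ i ∈ range k, pad β i ≤ ∑ i ∈ range k, e i) :
    Matrix.trace (A * B) ≤ ∑ i ∈ range p, pad α i * e i := by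
  obtain ⟨V, hV, rfl⟩ := hA
  obtain ⟨W, hW, rfl⟩ := hB
  set Z := Vᵀ * W with hZdef
  have hZ : Ortho Z := ortho_mul hV hW
  set afin : Fin p → ℝ := fun i => ∑ j, β j * (Z i j)^2 with hafin
  have htr : Matrix.trace ((V * Matrix.diagonal α * Vᵀ) * (W * Matrix.diagonal β * Wᵀ))
      = ∑ i ∈ range p, pad α i * pad afin i := by
    rw [trace_spec_formula V W α β hV]
    rw [← Fin.sum_univ_eq_sum_range (fun i => pad α i * pad afin i) p]
    refine Finset.sum_congr rfl fun i _ => ?_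
    rw [pad_fin, pad_fin, hafin, Finset.mul_sum]
    exact Finset.sum_congr rfl fun j _ => by ring
  rw [htr]
  refine abel_le (pad α) (pad afin) e (pad_anti hα hα0) (pad_nonneg hα0) ?_
  intro k hk
  -- ∑_{i<k} afin i ≤ ∑_{i<k} pad β ≤ ∑_{i<k} e
  refine le_trans ?_ (hpre k hk)
  rw [sum_range_pad_eq hk afin]
  set c : Fin p → ℝ := fun j => ∑ i : Fin p, (if i.1 < k then (Z i j)^2 else 0) with hc
  have hswap : ∑ i : Fin p, (if i.1 < k then afin i else 0) = ∑ j, β j * c j := by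
    calc ∑ i : Fin p, (if i.1 < k then afin i else 0)
        = ∑ i : Fin p, ∑ j, (if i.1 < k then β j * (Z i j)^2 else 0) := by
          refine Finset.sum_congr rfl fun i _ => ?_
          by_cases h : i.1 < k <;> simp [h, hafin, Finset.mul_sum]
      _ = ∑ j, ∑ i : Fin p, (if i.1 < k then β j * (Z i j)^2 else 0) := Finset.sum_comm
      _ = ∑ j, β j * c j := by
          refine Finset.sum_congr rfl fun j _ => ?_
          rw [hc, Finset.mul_sum]
          refine Finset.sum_congr rfl fun i _ => ?_
          by_cases h : i.1 < k <;> simp [h]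
  rw [hswap]
  have hone : ∑ i : Fin p, (if i.1 < k then (1:ℝ) else 0) = (k : ℝ) := by
    rw [← sum_range_pad_eq hk (fun _ => (1:ℝ))]
    rw [Finset.sum_congr rfl fun i hi => pad_lt (lt_of_lt_of_le (Finset.mem_range.1 hi) hk)]
    simp
  refine key_count_fin hk β c hβ hβ0 (fun j => ?_) (fun j => ?_) ?_
  · exact Finset.sum_nonneg fun i _ => by positivity
  · calc c j ≤ ∑ i, (Z i j)^2 := by
          refine Finset.sum_le_sum fun i _ => ?_
          by_cases h : i.1 < k <;> simp [h] <;> positivity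
      _ = 1 := ortho_col_sq hZ j
  · rw [hc]
    rw [Finset.sum_comm]
    rw [← hone]
    refine Finset.sum_congr rfl fun i _ => ?_
    by_cases h : i.1 < k
    · simp only [h, if_true]
      exact ortho_row_sq hZ i
    · simp [h]

end part3
section part4
variable {p : ℕ}

lemma trace_spec_same (V : Matrix (Fin p) (Fin p) ℝ) (hV : Ortho V) (μ ν : Fin p → ℝ) :
    Matrix.trace ((V * Matrix.diagonal μ * Vᵀ) * (V * Matrix.diagonal ν * Vᵀ))
      = ∑ i, μ i * ν i := by
  rw [trace_spec_formula V V μ ν hV, show Vᵀ * V = 1 from hV]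
  refine Finset.sum_congr rfl fun i _ => ?_
  rw [Finset.sum_eq_single i]
  · simp
  · intro j _ hji
    rw [Matrix.one_apply_ne (fun h => hji h.symm)]
    ring
  · intro h; exact absurd (Finset.mem_univ i) h

lemma trace_spec_psd_nonneg {A B : Matrix (Fin p) (Fin p) ℝ} {α : Fin p → ℝ}
    (hA : Spec A α) (hα0 : ∀ i, 0 ≤ α i) (hB : B.PosSemidef) :
    0 ≤ Matrix.trace (A * B) := by
  obtain ⟨V, hV, rfl⟩ := hA
  have h1 : V * Matrix.diagonal α * Vᵀ * B = V * (Matrix.diagonal α * (Vᵀ * B)) := by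
    simp only [Matrix.mul_assoc]
  rw [h1, Matrix.trace_mul_comm V (Matrix.diagonal α * (Vᵀ * B)),
    show Matrix.diagonal α * (Vᵀ * B) * V = Matrix.diagonal α * (Vᵀ * B * V) by
      simp only [Matrix.mul_assoc],
    trace_diagonal_mul]
  refine Finset.sum_nonneg fun i _ => mul_nonneg (hα0 i) ?_
  have h3 := hB.dotProduct_mulVec_nonneg (fun a => V a i)
  simp only [dotProduct, Matrix.mulVec, Pi.star_apply, star_trivial] at h3
  rw [Matrix.mul_apply]
  simp only [Matrix.mul_apply, Matrix.transpose_apply, Finset.sum_mul]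
  rw [Finset.sum_comm]
  convert h3 using 1
  refine Finset.sum_congr rfl fun a _ => ?_
  rw [Finset.mul_sum]
  exact Finset.sum_congr rfl fun b _ => by ring

lemma spec_rank_card {M : Matrix (Fin p) (Fin p) ℝ} {μ : Fin p → ℝ} (h : Spec M μ) :
    M.rank = Fintype.card {i // μ i ≠ 0} := by
  obtain ⟨V, hV, rfl⟩ := h
  have h1 : V.det * V.det = 1 := by
    have := congrArg Matrix.det hV
    rwa [Matrix.det_mul, Matrix.det_transpose, Matrix.det_one] at this
  have hdet : IsUnit V.det := isUnit_iff_ne_zero.2 (fun h0 => by rw [h0, mul_zero] at h1; norm_num at h1)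
  have hdetT : IsUnit Vᵀ.det := by rwa [Matrix.det_transpose]
  rw [Matrix.mul_assoc, Matrix.rank_mul_eq_right_of_isUnit_det V (Matrix.diagonal μ * Vᵀ) hdet,
    Matrix.rank_mul_eq_left_of_isUnit_det Vᵀ (Matrix.diagonal μ) hdetT,
    Matrix.rank_diagonal]

lemma spec_tail_zero {M : Matrix (Fin p) (Fin p) ℝ} {μ : Fin p → ℝ} (h : Spec M μ)
    (hμa : Antitone μ) (hμ0 : ∀ i, 0 ≤ μ i) {k : ℕ} (hrank : M.rank ≤ k) :
    ∀ i : Fin p, k ≤ i.1 → μ i = 0 := by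
  intro i hi
  by_contra hne
  have hpos : 0 < μ i := lt_of_le_of_ne (hμ0 i) (Ne.symm hne)
  have hcard : Fintype.card {j // μ j ≠ 0} ≤ k := by
    rw [← spec_rank_card h]; exact hrank
  have key : ∀ j : Fin (i.1+1), μ ⟨j.1, lt_of_le_of_lt (Nat.lt_succ_iff.1 j.2) i.2⟩ ≠ 0 := by
    intro j
    have hle : (⟨j.1, lt_of_le_of_lt (Nat.lt_succ_iff.1 j.2) i.2⟩ : Fin p) ≤ i := by
      rw [Fin.le_def]
      exact Nat.lt_succ_iff.1 j.2
    exact ne_of_gt (lt_of_lt_of_le hpos (hμa hle))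
  have hinj : Function.Injective (fun j : Fin (i.1 + 1) =>
      (⟨_, key j⟩ : {j // μ j ≠ 0})) := by
    intro a b hab
    have := congrArg (fun s : {j // μ j ≠ 0} => s.1.1) hab
    simp only at this
    exact Fin.ext this
  have hle := Fintype.card_le_of_injective _ hinj
  rw [Fintype.card_fin] at hle
  omega

end part4
section part5
variable {p : ℕ}

def indk (p k : ℕ) : Fin p → ℝ := fun i => if i.1 < k then 1 else 0

lemma indk_anti (p k : ℕ) : Antitone (indk p k) := by
  intro i j hij
  simp only [indk]
  by_cases hj : j.1 < k
  · rw [if_pos hj, if_pos (lt_of_le_of_lt (Fin.le_def.1 hij) hj)]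
  · rw [if_neg hj]
    by_cases hi : i.1 < k <;> simp [hi]

lemma indk_nonneg (p k : ℕ) : ∀ i, 0 ≤ indk p k i := by
  intro i; rw [indk]; by_cases h : i.1 < k <;> simp [h]

lemma indk_le_one (p k : ℕ) : ∀ i, indk p k i ≤ 1 := by
  intro i; rw [indk]; by_cases h : i.1 < k <;> simp [h]

lemma sum_ite_range' (j k : ℕ) (g : ℕ → ℝ) :
    ∑ i ∈ range j, (if i < k then g i else 0) = ∑ i ∈ range (min j k), g i := by
  rw [← sum_ite_range (min_le_left j k) g]
  refine Finset.sum_congr rfl fun i hi => ?_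
  have hij := Finset.mem_range.1 hi
  by_cases h : i < k
  · rw [if_pos h, if_pos (lt_min hij h)]
  · rw [if_neg h, if_neg (fun hc => h (lt_of_lt_of_le hc (min_le_right j k)))]

lemma ortho_isUnit_det {V : Matrix (Fin p) (Fin p) ℝ} (hV : Ortho V) : IsUnit V.det := by
  have h1 : V.det * V.det = 1 := by
    have := congrArg Matrix.det (hV : Vᵀ * V = 1)
    rwa [Matrix.det_mul, Matrix.det_transpose, Matrix.det_one] at this
  exact isUnit_iff_ne_zero.2 (fun h0 => by rw [h0, mul_zero] at h1; norm_num at h1)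

lemma card_indk_le (p k : ℕ) : Fintype.card {i : Fin p // indk p k i ≠ 0} ≤ k := by
  have hlt : ∀ s : {i : Fin p // indk p k i ≠ 0}, s.1.1 < k := by
    intro s
    by_contra h
    exact s.2 (by rw [indk]; simp [h])
  have hinj : Function.Injective (fun s : {i : Fin p // indk p k i ≠ 0} =>
      (⟨s.1.1, hlt s⟩ : Fin k)) := by
    intro a b hab
    simp only [Fin.mk.injEq] at hab
    exact Subtype.ext (Fin.ext hab)
  have := Fintype.card_le_of_injective _ hinj
  rwa [Fintype.card_fin] at this

lemma proj_trace {M V : Matrix (Fin p) (Fin p) ℝ} {μ : Fin p → ℝ} (hV : Ortho V)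
    (hM : M = V * Matrix.diagonal μ * Vᵀ) {k : ℕ} (hk : k ≤ p) :
    Matrix.trace ((V * Matrix.diagonal (indk p k) * Vᵀ) * M) = ∑ i ∈ range k, pad μ i := by
  rw [hM, trace_spec_same V hV, sum_range_pad_eq hk]
  refine Finset.sum_congr rfl fun i _ => ?_
  rw [indk]
  by_cases h : i.1 < k <;> simp [h]

lemma proj_conj_le {q r : ℕ} (Δ : Matrix (Fin q) (Fin r) ℝ)
    {Q : Matrix (Fin r) (Fin r) ℝ} {qs : Fin r → ℝ}
    (hQ : Spec Q qs) (hq0 : ∀ i, 0 ≤ qs i)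
    {V : Matrix (Fin q) (Fin q) ℝ} (hV : Ortho V) (k : ℕ) :
    Matrix.trace (Q * (Δᵀ * (V * Matrix.diagonal (indk q k) * Vᵀ) * Δ))
      ≤ Matrix.trace (Q * (Δᵀ * Δ)) := by
  set P := V * Matrix.diagonal (indk q k) * Vᵀ with hP
  set P' := V * Matrix.diagonal (fun i => 1 - indk q k i) * Vᵀ with hP'
  have hPP' : P + P' = 1 := by
    rw [hP, hP']
    have : Matrix.diagonal (indk q k) + Matrix.diagonal (fun i => 1 - indk q k i)
        = Matrix.diagonal (fun _ => (1:ℝ)) := by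
      rw [Matrix.diagonal_add]
      congr 1
      funext i; ring
    calc V * Matrix.diagonal (indk q k) * Vᵀ + V * Matrix.diagonal (fun i => 1 - indk q k i) * Vᵀ
        = V * (Matrix.diagonal (indk q k) + Matrix.diagonal (fun i => 1 - indk q k i)) * Vᵀ := by
          rw [Matrix.mul_add, Matrix.add_mul]
      _ = V * Vᵀ := by rw [this, Matrix.diagonal_one, Matrix.mul_one]
      _ = 1 := Ortho.self_mul_T hV
  have hsplit : Δᵀ * Δ = Δᵀ * P * Δ + Δᵀ * P' * Δ := by
    calc Δᵀ * Δ = Δᵀ * ((P + P') * Δ) := by rw [hPP', Matrix.one_mul]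
      _ = Δᵀ * P * Δ + Δᵀ * P' * Δ := by
          rw [Matrix.add_mul, Matrix.mul_add]
          simp only [Matrix.mul_assoc]
  have hP'psd : (Δᵀ * P' * Δ).PosSemidef := by
    have hspec : Spec P' (fun i => 1 - indk q k i) := ⟨V, hV, rfl⟩
    have hpsd : P'.PosSemidef := hspec.posSemidef (fun i => by
      have := indk_le_one q k i; linarith)
    have := hpsd.conjTranspose_mul_mul_same Δ
    rwa [Matrix.conjTranspose_eq_transpose_of_trivial] at this
  have hnn : 0 ≤ Matrix.trace (Q * (Δᵀ * P' * Δ)) :=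
    trace_spec_psd_nonneg hQ hq0 hP'psd
  rw [hsplit, Matrix.mul_add, Matrix.trace_add]
  linarith

/-- The core inequality. -/
lemma core {m n : ℕ} (Δ : Matrix (Fin m) (Fin n) ℝ) {A : Matrix (Fin m) (Fin m) ℝ}
    {G : Matrix (Fin n) (Fin n) ℝ} {x : Fin m → ℝ} {y d : Fin n → ℝ}
    (hA : Spec A x) (hx : Antitone x) (hx0 : ∀ i, 0 ≤ x i)
    (hG : Spec G y) (hy : Antitone y) (hy0 : ∀ i, 0 ≤ y i)
    (hD : Spec (Δᵀ * Δ) d) (hd : Antitone d) (hd0 : ∀ i, 0 ≤ d i) :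
    Matrix.trace (A * (Δ * G * Δᵀ)) ≤
      ∑ i ∈ range (min m n), pad d i * pad x i * pad y i := by
  have hGpsd : G.PosSemidef := hG.posSemidef hy0
  have hBpsd : (Δ * G * Δᵀ).PosSemidef := by
    have := hGpsd.mul_mul_conjTranspose_same Δ
    rwa [Matrix.conjTranspose_eq_transpose_of_trivial] at this
  obtain ⟨β, hβa, hβ0, hBspec⟩ := exists_spec_sorted hBpsd
  set e : ℕ → ℝ := fun i => if i < min m n then pad d i * pad y i else 0 with he
  have hpre : ∀ k, k ≤ m → ∑ i ∈ range k, pad β i ≤ ∑ i ∈ range k, e i := by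
    intro k hk
    obtain ⟨V, hV, hBeq⟩ := hBspec
    set P := V * Matrix.diagonal (indk m k) * Vᵀ with hPdef
    set C := Δᵀ * P * Δ with hCdef
    have h2 : Matrix.trace (P * (Δ * G * Δᵀ)) = Matrix.trace (G * C) := by
      calc Matrix.trace (P * (Δ * G * Δᵀ)) = Matrix.trace ((P * Δ * G) * Δᵀ) := by
            simp only [Matrix.mul_assoc]
        _ = Matrix.trace (Δᵀ * (P * Δ * G)) := (Matrix.trace_mul_comm _ _).symm
        _ = Matrix.trace (C * G) := by rw [hCdef]; simp only [Matrix.mul_assoc]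
        _ = Matrix.trace (G * C) := Matrix.trace_mul_comm _ _
    have hPspec : Spec P (indk m k) := ⟨V, hV, rfl⟩
    have hCpsd : C.PosSemidef := by
      have hPpsd : P.PosSemidef := hPspec.posSemidef (indk_nonneg m k)
      have := hPpsd.conjTranspose_mul_mul_same Δ
      rwa [Matrix.conjTranspose_eq_transpose_of_trivial] at this
    obtain ⟨γ, hγa, hγ0, hCspec⟩ := exists_spec_sorted hCpsd
    -- rank bound
    have hrank : C.rank ≤ k := by
      calc C.rank ≤ (Δᵀ * P).rank := by
            rw [hCdef]; exact Matrix.rank_mul_le_left _ _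
        _ ≤ P.rank := Matrix.rank_mul_le_right _ _
        _ ≤ k := by
            rw [hPdef, Matrix.mul_assoc,
              Matrix.rank_mul_eq_right_of_isUnit_det V _ (ortho_isUnit_det hV),
              Matrix.rank_mul_eq_left_of_isUnit_det Vᵀ _
                (by rw [Matrix.det_transpose]; exact ortho_isUnit_det hV),
              Matrix.rank_diagonal]
            exact card_indk_le m k
    have htail : ∀ i : Fin n, k ≤ i.1 → γ i = 0 := spec_tail_zero hCspec hγa hγ0 hrank
    obtain ⟨W, hW, hCeq⟩ := hCspec
    -- prefix-monotonicity for γ against d, truncated at k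
    have hmono0 : ∀ j, j ≤ n → j ≤ k → ∑ i ∈ range j, pad γ i ≤ ∑ i ∈ range j, pad d i := by
      intro j hj hjk
      set Q := W * Matrix.diagonal (indk n j) * Wᵀ with hQdef
      have hQspec : Spec Q (indk n j) := ⟨W, hW, rfl⟩
      have hq1 : ∑ i ∈ range j, pad γ i = Matrix.trace (Q * C) := (proj_trace hW hCeq hj).symm
      have hq2 : Matrix.trace (Q * C) ≤ Matrix.trace (Q * (Δᵀ * Δ)) := by
        rw [hCdef, hPdef]
        exact proj_conj_le Δ hQspec (indk_nonneg n j) hV k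
      have hq3 : Matrix.trace (Q * (Δᵀ * Δ)) ≤ ∑ i ∈ range n, pad (indk n j) i * pad d i :=
        ruhe_flex (pad d) hQspec (indk_anti n j) (indk_nonneg n j) hD hd hd0
          (fun _ _ => le_refl _)
      have hq4 : ∑ i ∈ range n, pad (indk n j) i * pad d i = ∑ i ∈ range j, pad d i := by
        calc ∑ i ∈ range n, pad (indk n j) i * pad d i
            = ∑ i ∈ range n, (if i < j then pad d i else 0) := by
              refine Finset.sum_congr rfl fun i hi => ?_
              rw [pad_lt (Finset.mem_range.1 hi), indk]
              by_cases h : i < j <;> simp [h]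
          _ = ∑ i ∈ range (min n j), pad d i := sum_ite_range' n j (pad d)
          _ = ∑ i ∈ range j, pad d i := by rw [min_eq_right hj]
      linarith
    have hmono : ∀ j, j ≤ n →
        ∑ i ∈ range j, pad γ i ≤ ∑ i ∈ range j, (if i < k then pad d i else 0) := by
      intro j hj
      have hsplitγ : ∑ i ∈ range j, pad γ i = ∑ i ∈ range (min j k), pad γ i := by
        rcases le_or_gt j k with h | h
        · rw [min_eq_left h]
        · rw [min_eq_right (le_of_lt h), sum_range_split (pad γ) (le_of_lt h)]
          have : ∑ i ∈ Finset.Ico k j, pad γ i = 0 := by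
            refine Finset.sum_eq_zero fun i hi => ?_
            have hik : k ≤ i := (Finset.mem_Ico.1 hi).1
            by_cases hin : i < n
            · rw [pad_lt hin]
              exact htail ⟨i, hin⟩ hik
            · exact pad_ge (not_lt.1 hin)
          rw [this, add_zero]
      rw [hsplitγ, sum_ite_range' j k (pad d)]
      exact hmono0 (min j k) (le_trans (min_le_left j k) hj) (min_le_right j k)
    -- now apply ruhe_flex : trace (G * C) ≤ ∑ pad y * e'
    have hmain : Matrix.trace (G * C) ≤
        ∑ i ∈ range n, pad y i * (if i < k then pad d i else 0) :=
      ruhe_flex (fun i => if i < k then pad d i else 0) hG hy hy0 ⟨W, hW, hCeq⟩ hγa hγ0 hmono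
    have hms : ∑ i ∈ range n, pad y i * (if i < k then pad d i else 0)
        = ∑ i ∈ range k, e i := by
      calc ∑ i ∈ range n, pad y i * (if i < k then pad d i else 0)
          = ∑ i ∈ range n, (if i < k then pad d i * pad y i else 0) := by
            refine Finset.sum_congr rfl fun i _ => ?_
            by_cases h : i < k <;> simp [h] <;> ring
        _ = ∑ i ∈ range (min n k), pad d i * pad y i := sum_ite_range' n k _
        _ = ∑ i ∈ range (min k (min m n)), pad d i * pad y i := by
            rw [show min n k = min k (min m n) by omega]
        _ = ∑ i ∈ range k, (if i < min m n then pad d i * pad y i else 0) :=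
            (sum_ite_range' k (min m n) _).symm
        _ = ∑ i ∈ range k, e i := by
            refine Finset.sum_congr rfl fun i _ => ?_
            rw [he]
    calc ∑ i ∈ range k, pad β i = Matrix.trace (P * (Δ * G * Δᵀ)) :=
          (proj_trace hV hBeq hk).symm
      _ = Matrix.trace (G * C) := h2
      _ ≤ ∑ i ∈ range n, pad y i * (if i < k then pad d i else 0) := hmain
      _ = ∑ i ∈ range k, e i := hms
  have hfinal : Matrix.trace (A * (Δ * G * Δᵀ)) ≤ ∑ i ∈ range m, pad x i * e i :=
    ruhe_flex e hA hx hx0 hBspec hβa hβ0 hpre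
  calc Matrix.trace (A * (Δ * G * Δᵀ)) ≤ ∑ i ∈ range m, pad x i * e i := hfinal
    _ = ∑ i ∈ range m, (if i < min m n then pad d i * pad x i * pad y i else 0) := by
        refine Finset.sum_congr rfl fun i _ => ?_
        rw [he]
        by_cases h : i < min m n <;> simp [h] <;> ring
    _ = ∑ i ∈ range (min m (min m n)), pad d i * pad x i * pad y i :=
        sum_ite_range' m (min m n) _
    _ = ∑ i ∈ range (min m n), pad d i * pad x i * pad y i := by
        rw [show min m (min m n) = min m n by omega]

end part5
section part6

lemma frob_sq {m n : ℕ} (M : Matrix (Fin m) (Fin n) ℝ) :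
    (frob M)^2 = Matrix.trace (M * Mᵀ) := by
  rw [frob, Real.sq_sqrt (by positivity)]
  rw [Matrix.trace]
  refine Finset.sum_congr rfl fun i _ => ?_
  simp [Matrix.diag, Matrix.mul_apply, Matrix.transpose_apply, pow_two]

lemma unit_spec {p : ℕ} (U : Matrix (Fin p) (Fin p) ℝ) (hU : IsUnit U) {σ : Fin p → ℝ}
    (hσ : IsSVals U σ) :
    Spec ((U * Uᵀ)⁻¹) (fun i => ((σ i.rev)^2)⁻¹) ∧
    Antitone (fun i : Fin p => ((σ i.rev)^2)⁻¹) ∧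
    (∀ i : Fin p, 0 ≤ ((σ i.rev)^2)⁻¹) := by
  obtain ⟨hanti, e, hperm⟩ := hσ
  have hσnn : ∀ i, 0 ≤ σ i := by
    intro i; rw [hperm]; exact Real.sqrt_nonneg _
  have hherm := Matrix.isHermitian_conjTranspose_mul_self U
  have hTT : Uᴴ = Uᵀ := Matrix.conjTranspose_eq_transpose_of_trivial U
  have hpsd : (Uᴴ * U).PosSemidef := Matrix.posSemidef_conjTranspose_mul_self U
  have hev0 : ∀ i, 0 ≤ hherm.eigenvalues i := fun i => hpsd.eigenvalues_nonneg i
  have hspec0' : Spec (Uᴴ * U) hherm.eigenvalues := spec_of_isHermitian hherm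
  have hσ_eq : ∀ i, σ i ^ 2 = hherm.eigenvalues (e i) := by
    intro i
    rw [hperm]
    simp only [Function.comp_apply, sv]
    exact Real.sq_sqrt (hev0 _)
  have hσpos0 : ∀ i, (0:ℝ) < Real.sqrt (hherm.eigenvalues i) → True := fun _ _ => trivial
  obtain ⟨ev, hevdef⟩ : ∃ ev, hherm.eigenvalues = ev := ⟨_, rfl⟩
  rw [hevdef] at hev0 hspec0' hσ_eq
  have hspec0 : Spec (Uᵀ * U) ev := by rwa [hTT] at hspec0'
  have hdet : (Uᵀ * U).det ≠ 0 := by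
    rw [Matrix.det_mul, Matrix.det_transpose]
    have hd : U.det ≠ 0 := by
      have := (Matrix.isUnit_iff_isUnit_det U).1 hU
      exact this.ne_zero
    exact mul_ne_zero hd hd
  have hevne : ∀ i, ev i ≠ 0 := by
    intro i hzero
    apply hdet
    rw [hspec0.det_eq]
    exact Finset.prod_eq_zero (Finset.mem_univ i) hzero
  have hevpos : ∀ i, 0 < ev i :=
    fun i => lt_of_le_of_ne (hev0 i) (Ne.symm (hevne i))
  have hσpos : ∀ i, 0 < σ i := by
    intro i
    have h := hσ_eq i
    nlinarith [hevpos (e i), sq_nonneg (σ i), hσnn i]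
  have hswap : Spec (U * Uᵀ) ev := by
    have h1 : Spec (Uᵀ * (Uᵀ)ᵀ) ev := by
      rwa [Matrix.transpose_transpose]
    have := spec_swap h1 hevpos
    rwa [Matrix.transpose_transpose] at this
  have hinv : Spec ((U * Uᵀ)⁻¹) (fun i => (ev i)⁻¹) := hswap.inv hevne
  have hfinal : Spec ((U * Uᵀ)⁻¹) (fun i => ((σ i.rev)^2)⁻¹) := by
    have h2 := hinv.perm (Fin.revPerm.trans e)
    convert h2 using 1
    funext i
    simp only [Function.comp_apply, Equiv.trans_apply, Fin.revPerm_apply]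
    rw [hσ_eq]
  refine ⟨hfinal, ?_, fun i => by positivity⟩
  intro i j hij
  simp only
  have hr : j.rev ≤ i.rev := by rw [Fin.rev_le_rev]; exact hij
  have h1 : σ i.rev ≤ σ j.rev := hanti hr
  have h3 : σ i.rev ^ 2 ≤ σ j.rev ^ 2 := pow_le_pow_left₀ (hσnn _) h1 2
  exact inv_anti₀ (pow_pos (hσpos _) 2) h3

end part6
end SVD
open Finset in
theorem stmt4 (m n : ℕ) (Δ : Matrix (Fin m) (Fin n) ℝ)
    (U₁ : Matrix (Fin m) (Fin m) ℝ) (U₂ : Matrix (Fin n) (Fin n) ℝ)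
    (hU₁ : IsUnit U₁) (hU₂ : IsUnit U₂)
    (σΔ : Fin n → ℝ) (σ₁ : Fin m → ℝ) (σ₂ : Fin n → ℝ)
    (hΔ : IsSVals Δ σΔ) (h1 : IsSVals U₁ σ₁) (h2 : IsSVals U₂ σ₂) :
    (frob (U₁⁻¹ * Δ * (U₂⁻¹)ᵀ))^2 ≤
      ∑ i : Fin (min m n),
        (σΔ (Fin.castLE (min_le_right m n) i))^2 /
          ((σ₁ ((Fin.castLE (min_le_left m n) i).rev))^2 *
           (σ₂ ((Fin.castLE (min_le_right m n) i).rev))^2) := by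
  obtain ⟨hx_spec, hx_anti, hx0⟩ := SVD.unit_spec U₁ hU₁ h1
  obtain ⟨hy_spec, hy_anti, hy0⟩ := SVD.unit_spec U₂ hU₂ h2
  -- spectral data for Δ
  obtain ⟨hΔa, eΔ, hΔperm⟩ := hΔ
  have hσΔ0 : ∀ i, 0 ≤ σΔ i := by
    intro i; rw [hΔperm]; exact Real.sqrt_nonneg _
  have hhermΔ := Matrix.isHermitian_conjTranspose_mul_self Δ
  have hTTΔ : Δᴴ = Δᵀ := Matrix.conjTranspose_eq_transpose_of_trivial Δ
  have hpsdΔ : (Δᴴ * Δ).PosSemidef := Matrix.posSemidef_conjTranspose_mul_self Δ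
  have hev0 : ∀ i, 0 ≤ hhermΔ.eigenvalues i := fun i => hpsdΔ.eigenvalues_nonneg i
  have hspecΔ' : SVD.Spec (Δᴴ * Δ) hhermΔ.eigenvalues := SVD.spec_of_isHermitian hhermΔ
  have hσΔ_eq : ∀ i, σΔ i ^ 2 = hhermΔ.eigenvalues (eΔ i) := by
    intro i; rw [hΔperm]
    simp only [Function.comp_apply, sv]
    exact Real.sq_sqrt (hev0 _)
  obtain ⟨ev, hevdef⟩ : ∃ ev, hhermΔ.eigenvalues = ev := ⟨_, rfl⟩
  rw [hevdef] at hev0 hspecΔ' hσΔ_eq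
  have hspecΔ : SVD.Spec (Δᵀ * Δ) (fun i => (σΔ i)^2) := by
    have h0 : SVD.Spec (Δᵀ * Δ) ev := by rwa [hTTΔ] at hspecΔ'
    have h1' := h0.perm eΔ
    have heq : (ev ∘ eΔ) = fun i => (σΔ i)^2 := by
      funext i
      simp only [Function.comp_apply]
      exact (hσΔ_eq i).symm
    rwa [heq] at h1'
  have hd_anti : Antitone (fun i => (σΔ i)^2) :=
    fun i j hij => pow_le_pow_left₀ (hσΔ0 j) (hΔa hij) 2
  have hd0 : ∀ i : Fin n, 0 ≤ (σΔ i)^2 := fun i => sq_nonneg _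
  -- matrices
  set X := U₁⁻¹ with hX
  set Y := (U₂⁻¹)ᵀ with hY
  have hXTX : Xᵀ * X = (U₁ * U₁ᵀ)⁻¹ := by
    rw [hX, Matrix.mul_inv_rev, Matrix.transpose_nonsing_inv]
  have hYYT : Y * Yᵀ = (U₂ * U₂ᵀ)⁻¹ := by
    rw [hY, Matrix.transpose_transpose, Matrix.mul_inv_rev, Matrix.transpose_nonsing_inv]
  have hA : SVD.Spec (Xᵀ * X) (fun i : Fin m => ((σ₁ i.rev)^2)⁻¹) := by rwa [hXTX]
  have hG : SVD.Spec (Y * Yᵀ) (fun i : Fin n => ((σ₂ i.rev)^2)⁻¹) := by rwa [hYYT]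
  have hcore := SVD.core Δ hA hx_anti hx0 hG hy_anti hy0 hspecΔ hd_anti hd0
  have hLHS : (frob (X * Δ * Y))^2 = Matrix.trace ((Xᵀ * X) * (Δ * (Y * Yᵀ) * Δᵀ)) := by
    rw [SVD.frob_sq]
    have ht : (X * Δ * Y)ᵀ = Yᵀ * (Δᵀ * Xᵀ) := by
      rw [Matrix.transpose_mul, Matrix.transpose_mul]
    rw [ht]
    calc Matrix.trace ((X * Δ * Y) * (Yᵀ * (Δᵀ * Xᵀ)))
        = Matrix.trace (X * (Δ * (Y * (Yᵀ * (Δᵀ * Xᵀ))))) := by simp only [Matrix.mul_assoc]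
      _ = Matrix.trace ((Δ * (Y * (Yᵀ * (Δᵀ * Xᵀ)))) * X) := Matrix.trace_mul_comm _ _
      _ = Matrix.trace ((Δ * (Y * Yᵀ) * Δᵀ) * (Xᵀ * X)) := by simp only [Matrix.mul_assoc]
      _ = Matrix.trace ((Xᵀ * X) * (Δ * (Y * Yᵀ) * Δᵀ)) := Matrix.trace_mul_comm _ _
  have hRHS : ∑ i ∈ Finset.range (min m n),
        SVD.pad (fun i => (σΔ i)^2) i * SVD.pad (fun i : Fin m => ((σ₁ i.rev)^2)⁻¹) i
          * SVD.pad (fun i : Fin n => ((σ₂ i.rev)^2)⁻¹) i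
      = ∑ i : Fin (min m n),
        (σΔ (Fin.castLE (min_le_right m n) i))^2 /
          ((σ₁ ((Fin.castLE (min_le_left m n) i).rev))^2 *
           (σ₂ ((Fin.castLE (min_le_right m n) i).rev))^2) := by
    rw [← Fin.sum_univ_eq_sum_range (fun i =>
      SVD.pad (fun i => (σΔ i)^2) i * SVD.pad (fun i : Fin m => ((σ₁ i.rev)^2)⁻¹) i
        * SVD.pad (fun i : Fin n => ((σ₂ i.rev)^2)⁻¹) i) (min m n)]
    refine Finset.sum_congr rfl fun i _ => ?_
    have e1 : SVD.pad (fun j : Fin n => (σΔ j)^2) i.1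
        = (σΔ (Fin.castLE (min_le_right m n) i))^2 :=
      SVD.pad_fin _ (Fin.castLE (min_le_right m n) i)
    have e2 : SVD.pad (fun j : Fin m => ((σ₁ j.rev)^2)⁻¹) i.1
        = ((σ₁ ((Fin.castLE (min_le_left m n) i).rev))^2)⁻¹ :=
      SVD.pad_fin _ (Fin.castLE (min_le_left m n) i)
    have e3 : SVD.pad (fun j : Fin n => ((σ₂ j.rev)^2)⁻¹) i.1
        = ((σ₂ ((Fin.castLE (min_le_right m n) i).rev))^2)⁻¹ :=
      SVD.pad_fin _ (Fin.castLE (min_le_right m n) i)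
    rw [e1, e2, e3, div_eq_mul_inv, mul_inv]
    ring
  calc (frob (X * Δ * Y))^2
      = Matrix.trace ((Xᵀ * X) * (Δ * (Y * Yᵀ) * Δᵀ)) := hLHS
    _ ≤ ∑ i ∈ Finset.range (min m n),
        SVD.pad (fun i => (σΔ i)^2) i * SVD.pad (fun i : Fin m => ((σ₁ i.rev)^2)⁻¹) i
          * SVD.pad (fun i : Fin n => ((σ₂ i.rev)^2)⁻¹) i := hcore
    _ = _ := hRHS
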